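/- Let μ_t (for t > 0) be a family of probability measures on the space of finite subsets of [0,t] such that: (i) μ_{s+t} is the law of C₁ ∪ (C₂ + s) where C₁ ~ μ_s and C₂ ~ μ_t are independent; (ii) μ_t({∅}) = e^{−λt} for some fixed λ ≥ 0 and all t > 0. Then μ_t is the law of the point set of a Poisson point process of intensity λ on [0,t]; in particular, the number of points of a μ_t-distributed set has Poisson distribution with parameter λt. -/

import Mathlib

open MeasureTheory ProbabilityTheory Classical

noncomputable instance : MeasurableSpace (Finset ℝ) := ⊤

section Stmt7Aux
open Filter Real Set Topology ENNReal

variable {μ : ℝ → Measure (Finset ℝ)} {lam : ℝ}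

private lemma msetF (S : Set (Finset ℝ)) : MeasurableSet S :=
  MeasurableSpace.measurableSet_top

private lemma measF {α : Type*} (f : Finset ℝ → α) [MeasurableSpace α] : Measurable f :=
  fun _ _ => msetF _

private lemma meas_eq_of_diff {X : Type*} [MeasurableSpace X] (ν : Measure X)
    {S S' N : Set X} (hN : ν N = 0) (h1 : S ⊆ S' ∪ N) (h2 : S' ⊆ S ∪ N) :
    ν S = ν S' := by
  apply le_antisymm
  · calc ν S ≤ ν (S' ∪ N) := measure_mono h1
      _ ≤ ν S' + ν N := measure_union_le _ _
      _ = ν S' := by rw [hN, add_zero]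
  · calc ν S' ≤ ν (S ∪ N) := measure_mono h2
      _ ≤ ν S + ν N := measure_union_le _ _
      _ = ν S := by rw [hN, add_zero]

private lemma split (hprob : ∀ t : ℝ, 0 < t → IsProbabilityMeasure (μ t))
    (hfact : ∀ s t : ℝ, 0 < s → 0 < t →
      μ (s + t) = ((μ s).prod (μ t)).map
        (fun p : Finset ℝ × Finset ℝ => p.1 ∪ p.2.image (fun x => x + s)))
    {s t : ℝ} (hs : 0 < s) (ht : 0 < t) (S : Set (Finset ℝ)) :
    μ (s + t) S = ((μ s).prod (μ t))
      ((fun p : Finset ℝ × Finset ℝ => p.1 ∪ p.2.image (fun x => x + s)) ⁻¹' S) := by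
  haveI := hprob s hs; haveI := hprob t ht; haveI := hprob (s + t) (by linarith)
  have hae : AEMeasurable (fun p : Finset ℝ × Finset ℝ => p.1 ∪ p.2.image (fun x => x + s))
      ((μ s).prod (μ t)) := by
    by_contra h
    have h0 : μ (s + t) = 0 := by
      rw [hfact s t hs ht, Measure.map_of_not_aemeasurable h]
    have h1 : μ (s + t) Set.univ = 1 := measure_univ
    rw [h0] at h1
    simp at h1
  rw [hfact s t hs ht, Measure.map_apply_of_aemeasurable hae (msetF S)]

private lemma supp_null (hprob : ∀ t : ℝ, 0 < t → IsProbabilityMeasure (μ t))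
    (hsupp : ∀ t : ℝ, 0 < t → μ t {C : Finset ℝ | (C : Set ℝ) ⊆ Set.Icc 0 t} = 1)
    {t : ℝ} (ht : 0 < t) :
    μ t {C : Finset ℝ | ¬ (C : Set ℝ) ⊆ Set.Icc 0 t} = 0 := by
  haveI := hprob t ht
  have h : {C : Finset ℝ | ¬ (C : Set ℝ) ⊆ Set.Icc 0 t}
      = {C : Finset ℝ | (C : Set ℝ) ⊆ Set.Icc 0 t}ᶜ := rfl
  rw [h, measure_compl (msetF _) (measure_ne_top _ _), hsupp t ht, measure_univ, tsub_self]
-- continuing inside section; will be concatenated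
private lemma qstep1 (hprob : ∀ t : ℝ, 0 < t → IsProbabilityMeasure (μ t))
    (hfact : ∀ s t : ℝ, 0 < s → 0 < t →
      μ (s + t) = ((μ s).prod (μ t)).map
        (fun p : Finset ℝ × Finset ℝ => p.1 ∪ p.2.image (fun x => x + s)))
    {x T : ℝ} (hx : 0 < x) (hxT : x < T) :
    μ x {C : Finset ℝ | x ∈ C} ≤ μ T {C : Finset ℝ | x ∈ C} := by
  haveI := hprob x hx; haveI := hprob (T - x) (by linarith)
  have hT : T = x + (T - x) := by ring
  rw [hT, split hprob hfact hx (by linarith)]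
  have hsub : {A : Finset ℝ | x ∈ A} ×ˢ (Set.univ : Set (Finset ℝ)) ⊆
      (fun p : Finset ℝ × Finset ℝ => p.1 ∪ p.2.image (fun y => y + x)) ⁻¹' {C | x ∈ C} := by
    rintro ⟨A, B⟩ ⟨hA, -⟩
    exact Finset.mem_union_left _ hA
  calc μ x {C : Finset ℝ | x ∈ C}
      = μ x {A : Finset ℝ | x ∈ A} * μ (T - x) Set.univ := by rw [measure_univ, mul_one]
    _ = ((μ x).prod (μ (T - x))) ({A : Finset ℝ | x ∈ A} ×ˢ Set.univ) :=
        (Measure.prod_prod _ _).symm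
    _ ≤ _ := measure_mono hsub

private lemma qstep2 (hprob : ∀ t : ℝ, 0 < t → IsProbabilityMeasure (μ t))
    (hsupp : ∀ t : ℝ, 0 < t → μ t {C : Finset ℝ | (C : Set ℝ) ⊆ Set.Icc 0 t} = 1)
    (hfact : ∀ s t : ℝ, 0 < s → 0 < t →
      μ (s + t) = ((μ s).prod (μ t)).map
        (fun p : Finset ℝ × Finset ℝ => p.1 ∪ p.2.image (fun x => x + s)))
    {x T' T : ℝ} (hx : 0 < x) (h1 : x < T') (h2 : T' < T) :
    μ T {C : Finset ℝ | x ∈ C} = μ T' {C : Finset ℝ | x ∈ C} := by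
  haveI := hprob T' (by linarith); haveI := hprob (T - T') (by linarith)
  have hT : T = T' + (T - T') := by ring
  rw [hT, split hprob hfact (by linarith) (by linarith)]
  set N : Set (Finset ℝ × Finset ℝ) :=
    (Set.univ : Set (Finset ℝ)) ×ˢ {B : Finset ℝ | ¬ (B : Set ℝ) ⊆ Set.Icc 0 (T - T')} with hN
  have hNnull : ((μ T').prod (μ (T - T'))) N = 0 := by
    rw [hN, Measure.prod_prod, supp_null hprob hsupp (by linarith), mul_zero]
  have := meas_eq_of_diff ((μ T').prod (μ (T - T'))) hNnull
    (S := (fun p : Finset ℝ × Finset ℝ => p.1 ∪ p.2.image (fun y => y + T')) ⁻¹' {C | x ∈ C})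
    (S' := {A : Finset ℝ | x ∈ A} ×ˢ (Set.univ : Set (Finset ℝ)))
    ?_ ?_
  · rw [this, Measure.prod_prod, measure_univ, mul_one]
  · rintro ⟨A, B⟩ hp
    simp only [Set.mem_preimage, Set.mem_setOf_eq, Finset.mem_union, Finset.mem_image] at hp
    rcases hp with hA | ⟨b, hb, hbx⟩
    · exact Or.inl ⟨hA, Set.mem_univ _⟩
    · refine Or.inr ⟨Set.mem_univ _, fun hsub => ?_⟩
      have := (hsub hb).1
      linarith
  · rintro ⟨A, B⟩ ⟨hA, -⟩
    exact Or.inl (Finset.mem_union_left _ hA)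

private lemma qstep3 (hprob : ∀ t : ℝ, 0 < t → IsProbabilityMeasure (μ t))
    (hsupp : ∀ t : ℝ, 0 < t → μ t {C : Finset ℝ | (C : Set ℝ) ⊆ Set.Icc 0 t} = 1)
    (hfact : ∀ s t : ℝ, 0 < s → 0 < t →
      μ (s + t) = ((μ s).prod (μ t)).map
        (fun p : Finset ℝ × Finset ℝ => p.1 ∪ p.2.image (fun x => x + s)))
    {u x T : ℝ} (hu : 0 < u) (hux : u < x) (hxT : x < T) :
    μ T {C : Finset ℝ | x ∈ C} = μ (T - u) {C : Finset ℝ | x - u ∈ C} := by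
  haveI := hprob u hu; haveI := hprob (T - u) (by linarith)
  have hT : T = u + (T - u) := by ring
  rw [hT, split hprob hfact hu (by linarith)]
  set N : Set (Finset ℝ × Finset ℝ) :=
    {A : Finset ℝ | ¬ (A : Set ℝ) ⊆ Set.Icc 0 u} ×ˢ (Set.univ : Set (Finset ℝ)) with hN
  have hNnull : ((μ u).prod (μ (T - u))) N = 0 := by
    rw [hN, Measure.prod_prod, supp_null hprob hsupp hu, zero_mul]
  have := meas_eq_of_diff ((μ u).prod (μ (T - u))) hNnull
    (S := (fun p : Finset ℝ × Finset ℝ => p.1 ∪ p.2.image (fun y => y + u)) ⁻¹' {C | x ∈ C})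
    (S' := (Set.univ : Set (Finset ℝ)) ×ˢ {B : Finset ℝ | x - u ∈ B})
    ?_ ?_
  · rw [this, Measure.prod_prod, measure_univ, one_mul]
    norm_num
  · rintro ⟨A, B⟩ hp
    simp only [Set.mem_preimage, Set.mem_setOf_eq, Finset.mem_union, Finset.mem_image] at hp
    rcases hp with hA | ⟨b, hb, hbx⟩
    · refine Or.inr ⟨fun hsub => ?_, Set.mem_univ _⟩
      have := (hsub hA).2
      linarith
    · refine Or.inl ⟨Set.mem_univ _, ?_⟩
      have : b = x - u := by linarith
      rwa [this] at hb
  · rintro ⟨A, B⟩ ⟨-, hB⟩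
    refine Or.inl ?_
    simp only [Set.mem_preimage, Set.mem_setOf_eq, Finset.mem_union, Finset.mem_image]
    exact Or.inr ⟨x - u, hB, by ring⟩
private lemma qeq (hprob : ∀ t : ℝ, 0 < t → IsProbabilityMeasure (μ t))
    (hsupp : ∀ t : ℝ, 0 < t → μ t {C : Finset ℝ | (C : Set ℝ) ⊆ Set.Icc 0 t} = 1)
    (hfact : ∀ s t : ℝ, 0 < s → 0 < t →
      μ (s + t) = ((μ s).prod (μ t)).map
        (fun p : Finset ℝ × Finset ℝ => p.1 ∪ p.2.image (fun x => x + s)))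
    {a b : ℝ} (ha0 : 0 < a) (ha1 : a < 1) (hb0 : 0 < b) (hb1 : b < 1) :
    μ 1 {C : Finset ℝ | a ∈ C} = μ 1 {C : Finset ℝ | b ∈ C} := by
  -- wlog a ≤ b
  have key : ∀ x y : ℝ, 0 < x → x < y → y < 1 →
      μ 1 {C : Finset ℝ | y ∈ C} = μ 1 {C : Finset ℝ | x ∈ C} := by
    intro x y hx hxy hy1
    have h3 : μ 1 {C : Finset ℝ | y ∈ C} = μ (1 - (y - x)) {C : Finset ℝ | x ∈ C} := by
      have := qstep3 hprob hsupp hfact (u := y - x) (x := y) (T := 1)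
        (by linarith) (by linarith) (by linarith)
      have hyx : y - (y - x) = x := by ring
      rwa [hyx] at this
    rw [h3]
    exact (qstep2 hprob hsupp hfact hx (by linarith) (by linarith)).symm
  rcases lt_trichotomy a b with h | h | h
  · exact (key a b ha0 h hb1).symm
  · rw [h]
  · exact key b a hb0 h ha1

private lemma interior_zero_one (hprob : ∀ t : ℝ, 0 < t → IsProbabilityMeasure (μ t))
    (hsupp : ∀ t : ℝ, 0 < t → μ t {C : Finset ℝ | (C : Set ℝ) ⊆ Set.Icc 0 t} = 1)
    (hfact : ∀ s t : ℝ, 0 < s → 0 < t →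
      μ (s + t) = ((μ s).prod (μ t)).map
        (fun p : Finset ℝ × Finset ℝ => p.1 ∪ p.2.image (fun x => x + s)))
    {a : ℝ} (ha0 : 0 < a) (ha1 : a < 1) :
    μ 1 {C : Finset ℝ | a ∈ C} = 0 := by
  haveI := hprob 1 one_pos
  set x : ℕ → ℝ := fun i => 1 / (i + 2) with hx
  have hx0 : ∀ i : ℕ, 0 < x i := by
    intro i; rw [hx]; positivity
  have hx1 : ∀ i : ℕ, x i < 1 := by
    intro i
    rw [hx]
    rw [div_lt_one (by positivity)]
    have : (0:ℝ) ≤ (i:ℝ) := Nat.cast_nonneg i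
    linarith
  have hxinj : Function.Injective x := by
    intro i j hij
    rw [hx] at hij
    field_simp at hij
    have hij' : (i:ℝ) = j := by linarith
    exact_mod_cast hij'
  -- all values equal
  have hconst : ∀ i : ℕ, μ 1 {C : Finset ℝ | x i ∈ C} = μ 1 {C : Finset ℝ | a ∈ C} :=
    fun i => qeq hprob hsupp hfact (hx0 i) (hx1 i) ha0 ha1
  -- DCT
  set F : ℕ → Finset ℝ → ℝ := fun i => Set.indicator {C : Finset ℝ | x i ∈ C} (fun _ => (1:ℝ))
  have hFint : ∀ i : ℕ, ∫ C, F i C ∂(μ 1) = ((μ 1) {C : Finset ℝ | x i ∈ C}).toReal := by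
    intro i
    rw [integral_indicator_const (1:ℝ) (msetF _)]
    simp [Measure.real]
  have hlim : Tendsto (fun i => ∫ C, F i C ∂(μ 1)) atTop (𝓝 (∫ C, (0:ℝ) ∂(μ 1))) := by
    apply tendsto_integral_of_dominated_convergence (fun _ => (1:ℝ))
    · intro i
      exact (measF (F i)).aestronglyMeasurable
    · exact integrable_const 1
    · intro i
      refine Eventually.of_forall (fun C => ?_)
      by_cases h : x i ∈ C <;> simp [F, Set.indicator_apply, h]
    · refine Eventually.of_forall (fun C => ?_)
      have hfin : {i : ℕ | x i ∈ C}.Finite := by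
        have : {i : ℕ | x i ∈ C} = x ⁻¹' (C : Set ℝ) := rfl
        rw [this]
        exact Set.Finite.preimage hxinj.injOn C.finite_toSet
      have hev : ∀ᶠ i in atTop, F i C = 0 := by
        have h1 := Set.Finite.eventually_cofinite_notMem hfin
        rw [Nat.cofinite_eq_atTop] at h1
        exact h1.mono (fun i hi => Set.indicator_of_notMem (s := {D : Finset ℝ | x i ∈ D}) hi _)
      exact Tendsto.congr' (hev.mono fun i hi => hi.symm) tendsto_const_nhds
  have hzero : ((μ 1) {C : Finset ℝ | a ∈ C}).toReal = 0 := by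
    have h1 : ∀ i, ∫ C, F i C ∂(μ 1) = ((μ 1) {C : Finset ℝ | a ∈ C}).toReal := by
      intro i; rw [hFint i, hconst i]
    rw [integral_zero] at hlim
    have := tendsto_nhds_unique (Tendsto.congr (fun i => (h1 i)) hlim)
      (tendsto_const_nhds (x := ((μ 1) {C : Finset ℝ | a ∈ C}).toReal) (f := atTop))
    -- hlim with congr is constant → 0
    exact this.symm
  have hne : (μ 1) {C : Finset ℝ | a ∈ C} ≠ ⊤ := measure_ne_top _ _
  exact (ENNReal.toReal_eq_zero_iff _).mp hzero |>.resolve_right hne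

private lemma interior_zero (hprob : ∀ t : ℝ, 0 < t → IsProbabilityMeasure (μ t))
    (hsupp : ∀ t : ℝ, 0 < t → μ t {C : Finset ℝ | (C : Set ℝ) ⊆ Set.Icc 0 t} = 1)
    (hfact : ∀ s t : ℝ, 0 < s → 0 < t →
      μ (s + t) = ((μ s).prod (μ t)).map
        (fun p : Finset ℝ × Finset ℝ => p.1 ∪ p.2.image (fun x => x + s)))
    {x T : ℝ} (hx : 0 < x) (hxT : x < T) :
    μ T {C : Finset ℝ | x ∈ C} = 0 := by
  rcases lt_or_ge x 1 with h1 | h1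
  · -- x < 1 : connect to μ 1 via an intermediate T' < min T 1
    set T' : ℝ := (x + min T 1) / 2 with hT'
    have hxm : x < min T 1 := lt_min hxT h1
    have h2 : x < T' := by rw [hT']; linarith
    have h3 : T' < T := by
      have : T' < min T 1 := by rw [hT']; linarith
      exact lt_of_lt_of_le this (min_le_left _ _)
    have h4 : T' < 1 := by
      have : T' < min T 1 := by rw [hT']; linarith
      exact lt_of_lt_of_le this (min_le_right _ _)
    rw [qstep2 hprob hsupp hfact hx h2 h3]
    rw [← qstep2 hprob hsupp hfact hx h2 h4]
    exact interior_zero_one hprob hsupp hfact hx h1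
  · -- x ≥ 1 : shift down by u = x - 1/2
    have h2 := qstep3 hprob hsupp hfact (u := x - 1/2) (x := x) (T := T)
      (by linarith) (by linarith) hxT
    have h3 : x - (x - 1/2) = (1:ℝ)/2 := by ring
    rw [h3] at h2
    rw [h2]
    have h4 : (1:ℝ)/2 < T - (x - 1/2) := by linarith
    rcases lt_or_ge ((1:ℝ)/2) 1 with h5 | h5
    · -- recurse into first case directly
      set T2 := T - (x - 1/2)
      set T' : ℝ := (1/2 + min T2 1) / 2 with hT'
      have hxm : (1:ℝ)/2 < min T2 1 := lt_min h4 (by norm_num)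
      have h2' : (1:ℝ)/2 < T' := by rw [hT']; linarith
      have h3' : T' < T2 := by
        have : T' < min T2 1 := by rw [hT']; linarith
        exact lt_of_lt_of_le this (min_le_left _ _)
      have h4' : T' < 1 := by
        have : T' < min T2 1 := by rw [hT']; linarith
        exact lt_of_lt_of_le this (min_le_right _ _)
      rw [qstep2 hprob hsupp hfact (by norm_num) h2' h3']
      rw [← qstep2 hprob hsupp hfact (by norm_num) h2' h4']
      exact interior_zero_one hprob hsupp hfact (by norm_num) (by norm_num)
    · norm_num at h5

private lemma endpoint_zero (hprob : ∀ t : ℝ, 0 < t → IsProbabilityMeasure (μ t))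
    (hsupp : ∀ t : ℝ, 0 < t → μ t {C : Finset ℝ | (C : Set ℝ) ⊆ Set.Icc 0 t} = 1)
    (hfact : ∀ s t : ℝ, 0 < s → 0 < t →
      μ (s + t) = ((μ s).prod (μ t)).map
        (fun p : Finset ℝ × Finset ℝ => p.1 ∪ p.2.image (fun x => x + s)))
    {u : ℝ} (hu : 0 < u) :
    μ u {C : Finset ℝ | u ∈ C} = 0 := by
  have h1 := qstep1 hprob hfact (x := u) (T := u + 1) hu (by linarith)
  have h2 := interior_zero hprob hsupp hfact (x := u) (T := u + 1) hu (by linarith)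
  exact le_antisymm (h1.trans_eq h2) (zero_le)

private lemma supp_Ico (hprob : ∀ t : ℝ, 0 < t → IsProbabilityMeasure (μ t))
    (hsupp : ∀ t : ℝ, 0 < t → μ t {C : Finset ℝ | (C : Set ℝ) ⊆ Set.Icc 0 t} = 1)
    (hfact : ∀ s t : ℝ, 0 < s → 0 < t →
      μ (s + t) = ((μ s).prod (μ t)).map
        (fun p : Finset ℝ × Finset ℝ => p.1 ∪ p.2.image (fun x => x + s)))
    {t : ℝ} (ht : 0 < t) :
    μ t {C : Finset ℝ | ¬ (C : Set ℝ) ⊆ Set.Ico 0 t} = 0 := by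
  refine le_antisymm ?_ (zero_le)
  have hsub : {C : Finset ℝ | ¬ (C : Set ℝ) ⊆ Set.Ico 0 t} ⊆
      {C : Finset ℝ | ¬ (C : Set ℝ) ⊆ Set.Icc 0 t} ∪ {C : Finset ℝ | t ∈ C} := by
    intro C hC
    by_cases h : (C : Set ℝ) ⊆ Set.Icc 0 t
    · right
      simp only [Set.mem_setOf_eq] at hC
      obtain ⟨y, hy, hy2⟩ := Set.not_subset.mp hC
      have hy3 := h hy
      simp only [Set.mem_Icc] at hy3
      simp only [Set.mem_Ico, not_and, not_lt] at hy2
      have : y = t := le_antisymm hy3.2 (hy2 hy3.1)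
      simpa [this] using hy
    · exact Or.inl h
  calc μ t {C : Finset ℝ | ¬ (C : Set ℝ) ⊆ Set.Ico 0 t}
      ≤ μ t ({C : Finset ℝ | ¬ (C : Set ℝ) ⊆ Set.Icc 0 t} ∪ {C : Finset ℝ | t ∈ C}) :=
        measure_mono hsub
    _ ≤ μ t {C : Finset ℝ | ¬ (C : Set ℝ) ⊆ Set.Icc 0 t} + μ t {C : Finset ℝ | t ∈ C} :=
        measure_union_le _ _
    _ = 0 := by
        rw [supp_null hprob hsupp ht, endpoint_zero hprob hsupp hfact ht, add_zero]
end Stmt7Aux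

private noncomputable def Ycount (n : ℕ) (w : ℝ) (C : Finset ℝ) : ℕ :=
  ((Finset.range n).filter
    (fun i : ℕ => ∃ x ∈ C, (i : ℝ) * w ≤ x ∧ x < ((i : ℝ) + 1) * w)).card

section Stmt7Aux2
open Filter Real Set Topology ENNReal

variable {μ : ℝ → Measure (Finset ℝ)} {lam : ℝ}

private lemma Ycount_union (n : ℕ) {w : ℝ} (hw : 0 < w) {A B : Finset ℝ}
    (hA : (A : Set ℝ) ⊆ Set.Ico 0 (((n:ℝ) + 1) * w))
    (hB : (B : Set ℝ) ⊆ Set.Ico 0 w) :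
    Ycount (n + 2) w (A ∪ B.image (fun x => x + ((n:ℝ) + 1) * w)) =
      Ycount (n + 1) w A + (if B.Nonempty then 1 else 0) := by
  classical
  set s : ℝ := ((n:ℝ) + 1) * w with hs
  set U := A ∪ B.image (fun x => x + s) with hU
  have hpredA : ∀ i ∈ Finset.range (n + 1),
      ((∃ x ∈ U, (i:ℝ) * w ≤ x ∧ x < ((i:ℝ)+1)*w) ↔
        (∃ x ∈ A, (i:ℝ)*w ≤ x ∧ x < ((i:ℝ)+1)*w)) := by
    intro i hi
    have hi' : i < n + 1 := Finset.mem_range.mp hi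
    constructor
    · rintro ⟨x, hxU, hx1, hx2⟩
      rw [hU, Finset.mem_union] at hxU
      rcases hxU with hxA | hxB
      · exact ⟨x, hxA, hx1, hx2⟩
      · exfalso
        obtain ⟨b, hb, rfl⟩ := Finset.mem_image.mp hxB
        have hb0 : 0 ≤ b := (hB hb).1
        have hin : (i:ℝ) + 1 ≤ (n:ℝ) + 1 := by
          have : (i:ℝ) ≤ (n:ℝ) := by exact_mod_cast Nat.lt_succ_iff.mp hi'
          linarith
        have h1 : ((i:ℝ)+1) * w ≤ ((n:ℝ)+1) * w := mul_le_mul_of_nonneg_right hin hw.le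
        rw [hs] at *
        linarith
    · rintro ⟨x, hxA, h⟩
      exact ⟨x, by rw [hU]; exact Finset.mem_union_left _ hxA, h⟩
  have hpredTop : (∃ x ∈ U, ((n+1:ℕ):ℝ) * w ≤ x ∧ x < (((n+1:ℕ):ℝ)+1)*w) ↔ B.Nonempty := by
    constructor
    · rintro ⟨x, hxU, hx1, hx2⟩
      rw [hU, Finset.mem_union] at hxU
      rcases hxU with hxA | hxB
      · exfalso
        have := (hA hxA).2
        push_cast at hx1
        rw [hs] at this
        linarith
      · obtain ⟨b, hb, rfl⟩ := Finset.mem_image.mp hxB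
        exact ⟨b, hb⟩
    · rintro ⟨b, hb⟩
      refine ⟨b + s, by rw [hU]; exact Finset.mem_union_right _ (Finset.mem_image_of_mem _ hb), ?_, ?_⟩
      · have := (hB hb).1
        push_cast
        rw [hs]
        linarith
      · have := (hB hb).2
        push_cast
        rw [hs]
        linarith
  have hrange : Finset.range (n + 2) = insert (n+1) (Finset.range (n+1)) := Finset.range_add_one
  rw [Ycount, hrange, Finset.filter_insert]
  by_cases hBne : B.Nonempty
  · rw [if_pos (hpredTop.mpr hBne)]
    rw [Finset.card_insert_of_notMem (by
      intro hmem
      exact absurd (Finset.mem_range.mp (Finset.mem_filter.mp hmem).1) (lt_irrefl _))]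
    rw [Finset.filter_congr hpredA]
    rw [if_pos hBne]
    rfl
  · rw [if_neg (fun h => hBne (hpredTop.mp h))]
    rw [Finset.filter_congr hpredA]
    rw [if_neg hBne]
    rfl

private lemma Ycount_le_card (n : ℕ) {w : ℝ} (hw : 0 < w) (C : Finset ℝ) :
    Ycount n w C ≤ C.card := by
  classical
  rw [Ycount]
  apply Finset.card_le_card_of_injOn
    (fun i : ℕ => if h : ∃ x ∈ C, (i:ℝ)*w ≤ x ∧ x < ((i:ℝ)+1)*w then h.choose else 0)
  · intro i hi
    have hp := (Finset.mem_filter.mp hi).2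
    simp only [Finset.mem_coe]
    rw [dif_pos hp]
    exact hp.choose_spec.1
  · intro i hi j hj hij
    have hpi := (Finset.mem_filter.mp hi).2
    have hpj := (Finset.mem_filter.mp hj).2
    simp only at hij
    rw [dif_pos hpi, dif_pos hpj] at hij
    have h1 := hpi.choose_spec.2
    have h2 := hpj.choose_spec.2
    rw [hij] at h1
    have hij1 : (i:ℝ) < (j:ℝ) + 1 := by
      have := lt_of_le_of_lt h1.1 h2.2
      exact lt_of_mul_lt_mul_right this hw.le
    have hij2 : (j:ℝ) < (i:ℝ) + 1 := by
      have := lt_of_le_of_lt h2.1 h1.2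
      exact lt_of_mul_lt_mul_right this hw.le
    have : i < j + 1 := by exact_mod_cast hij1
    have : j < i + 1 := by exact_mod_cast hij2
    omega

private lemma Ycount_eq_card {n : ℕ} {w : ℝ} (hw : 0 < w) {C : Finset ℝ}
    (hC : (C : Set ℝ) ⊆ Set.Ico 0 ((n:ℝ) * w))
    (hsep : ∀ x ∈ C, ∀ y ∈ C, x ≠ y → w ≤ |x - y|) :
    Ycount n w C = C.card := by
  classical
  refine le_antisymm (Ycount_le_card n hw C) ?_
  rw [Ycount]
  apply Finset.card_le_card_of_injOn (fun x => ⌊x / w⌋₊)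
  · intro x hx
    have hx' := hC hx
    rw [Set.mem_Ico] at hx'
    have hx0 : 0 ≤ x / w := div_nonneg hx'.1 hw.le
    simp only [Finset.mem_coe, Finset.mem_filter, Finset.mem_range]
    refine ⟨?_, x, hx, ?_, ?_⟩
    · rw [Nat.floor_lt hx0, div_lt_iff₀ hw]
      linarith [hx'.2]
    · have h := mul_le_mul_of_nonneg_right (Nat.floor_le hx0) hw.le
      rwa [div_mul_cancel₀ x hw.ne'] at h
    · exact (div_lt_iff₀ hw).mp (Nat.lt_floor_add_one _)
  · intro x hx y hy hxy
    by_contra hne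
    have hsep' := hsep x hx y hy hne
    have hx' := hC hx
    have hy' := hC hy
    rw [Set.mem_Ico] at hx' hy'
    have hx0 : 0 ≤ x / w := div_nonneg hx'.1 hw.le
    have hy0 : 0 ≤ y / w := div_nonneg hy'.1 hw.le
    have b1 : (⌊x / w⌋₊ : ℝ) * w ≤ x := by
      have h := mul_le_mul_of_nonneg_right (Nat.floor_le hx0) hw.le
      rwa [div_mul_cancel₀ x hw.ne'] at h
    have b2 : x < ((⌊x / w⌋₊ : ℝ) + 1) * w := (div_lt_iff₀ hw).mp (Nat.lt_floor_add_one _)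
    have b3 : (⌊y / w⌋₊ : ℝ) * w ≤ y := by
      have h := mul_le_mul_of_nonneg_right (Nat.floor_le hy0) hw.le
      rwa [div_mul_cancel₀ y hw.ne'] at h
    have b4 : y < ((⌊y / w⌋₊ : ℝ) + 1) * w := (div_lt_iff₀ hw).mp (Nat.lt_floor_add_one _)
    simp only at hxy
    rw [hxy] at b1 b2
    have : |x - y| < w := abs_sub_lt_iff.mpr ⟨by linarith, by linarith⟩
    linarith

private lemma exists_Ycount_eq_card {t : ℝ} (ht : 0 < t) (C : Finset ℝ)
    (hC : (C : Set ℝ) ⊆ Set.Ico 0 t) :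
    ∃ m : ℕ, Ycount (2 ^ m) (t / 2 ^ m) C = C.card := by
  classical
  have hcast : ∀ m : ℕ, (((2:ℕ)^m : ℕ) : ℝ) * (t / (2:ℝ)^m) = t := by
    intro m
    have h2 : ((2:ℝ))^m ≠ 0 := by positivity
    push_cast
    field_simp
  by_cases hc : C.card ≤ 1
  · refine ⟨0, Ycount_eq_card (by positivity) (by rw [hcast 0]; exact hC) ?_⟩
    intro x hx y hy hxy
    exact absurd (Finset.card_le_one.mp hc x hx y hy) hxy
  · push_neg at hc
    have key : ∃ δ : ℝ, 0 < δ ∧ ∀ x ∈ C, ∀ y ∈ C, x ≠ y → δ ≤ |x - y| := by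
      obtain ⟨a, ha, b, hb, hab⟩ := Finset.one_lt_card.mp hc
      have hDne : (C.offDiag.image (fun p : ℝ × ℝ => |p.1 - p.2|)).Nonempty :=
        ⟨|a - b|, Finset.mem_image.mpr ⟨(a, b), Finset.mem_offDiag.mpr ⟨ha, hb, hab⟩, rfl⟩⟩
      refine ⟨Finset.min' _ hDne, ?_, ?_⟩
      · obtain ⟨p, hp, hpe⟩ := Finset.mem_image.mp (Finset.min'_mem _ hDne)
        rw [← hpe]
        exact abs_pos.mpr (sub_ne_zero.mpr (Finset.mem_offDiag.mp hp).2.2)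
      · intro x hx y hy hxy
        exact Finset.min'_le _ _
          (Finset.mem_image.mpr ⟨(x, y), Finset.mem_offDiag.mpr ⟨hx, hy, hxy⟩, rfl⟩)
    obtain ⟨δ, hδpos, hδ⟩ := key
    obtain ⟨m, hm⟩ := pow_unbounded_of_one_lt (t / δ) (by norm_num : (1:ℝ) < 2)
    have hwle : t / (2:ℝ)^m ≤ δ := by
      rw [div_le_iff₀ (by positivity : (0:ℝ) < (2:ℝ)^m)]
      rw [div_lt_iff₀ hδpos] at hm
      linarith
    refine ⟨m, Ycount_eq_card (by positivity) (by rw [hcast m]; exact hC) ?_⟩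
    intro x hx y hy hxy
    exact hwle.trans (hδ x hx y hy hxy)

private lemma Ycount_le_double (n : ℕ) {w : ℝ} (hw : 0 < w) (C : Finset ℝ) :
    Ycount n w C ≤ Ycount (2 * n) (w / 2) C := by
  classical
  rw [Ycount, Ycount]
  apply Finset.card_le_card_of_injOn
    (fun i : ℕ => if (∃ x ∈ C, ((2*i : ℕ):ℝ)*(w/2) ≤ x ∧ x < (((2*i : ℕ):ℝ)+1)*(w/2)) then 2*i else 2*i+1)
  · intro i hi
    simp only [Finset.mem_coe] at hi ⊢
    rw [Finset.mem_filter, Finset.mem_range] at hi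
    obtain ⟨hin, x, hxC, hx1, hx2⟩ := hi
    by_cases hq : ∃ x ∈ C, ((2*i : ℕ):ℝ)*(w/2) ≤ x ∧ x < (((2*i : ℕ):ℝ)+1)*(w/2)
    · rw [if_pos hq, Finset.mem_filter, Finset.mem_range]
      exact ⟨by omega, hq⟩
    · rw [if_neg hq, Finset.mem_filter, Finset.mem_range]
      refine ⟨by omega, x, hxC, ?_, ?_⟩
      · by_contra hlt
        push_neg at hlt
        apply hq
        refine ⟨x, hxC, ?_, ?_⟩
        · push_cast
          push_cast at hx1
          linarith
        · push_cast
          push_cast at hlt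
          linarith
      · push_cast
        push_cast at hx2
        linarith
  · intro i hi j hj hij
    simp only at hij
    split_ifs at hij <;> omega
private lemma Ycount_le (n : ℕ) (w : ℝ) (C : Finset ℝ) : Ycount n w C ≤ n :=
  le_trans (Finset.card_filter_le _ _) (le_of_eq (Finset.card_range n))

private lemma Ycount_one {w : ℝ} (hw : 0 < w) {C : Finset ℝ}
    (hC : (C : Set ℝ) ⊆ Set.Ico 0 w) :
    Ycount 1 w C = if C.Nonempty then 1 else 0 := by
  classical
  rw [Ycount, Finset.range_one, Finset.filter_singleton]
  have hpred : (∃ x ∈ C, ((0:ℕ):ℝ) * w ≤ x ∧ x < (((0:ℕ):ℝ)+1) * w) ↔ C.Nonempty := by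
    constructor
    · rintro ⟨x, hx, -⟩; exact ⟨x, hx⟩
    · rintro ⟨x, hx⟩
      have := hC hx
      rw [Set.mem_Ico] at this
      exact ⟨x, hx, by push_cast; linarith [this.1], by push_cast; linarith [this.2]⟩
  by_cases h : C.Nonempty
  · rw [if_pos (hpred.mpr h), if_pos h, Finset.card_singleton]
  · rw [if_neg (fun hp => h (hpred.mp hp)), if_neg h, Finset.card_empty]

private lemma binom_pmf (hprob : ∀ t : ℝ, 0 < t → IsProbabilityMeasure (μ t))
    (hsupp : ∀ t : ℝ, 0 < t → μ t {C : Finset ℝ | (C : Set ℝ) ⊆ Set.Icc 0 t} = 1)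
    (hfact : ∀ s t : ℝ, 0 < s → 0 < t →
      μ (s + t) = ((μ s).prod (μ t)).map
        (fun p : Finset ℝ × Finset ℝ => p.1 ∪ p.2.image (fun x => x + s)))
    (hatom : ∀ t : ℝ, 0 < t →
      μ t {(∅ : Finset ℝ)} = ENNReal.ofReal (Real.exp (-lam * t))) :
    ∀ n : ℕ, ∀ w : ℝ, 0 < w → ∀ j : ℕ,
      μ (((n+1 : ℕ) : ℝ) * w) {C : Finset ℝ | Ycount (n+1) w C = j} =
        ((n+1).choose j : ℝ≥0∞) * (1 - ENNReal.ofReal (Real.exp (-(lam * w))))^j *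
          (ENNReal.ofReal (Real.exp (-(lam * w))))^((n+1) - j) := by
  intro n
  induction n with
  | zero =>
    intro w hw j
    haveI := hprob w hw
    have h1w : (((0:ℕ)+1 : ℕ) : ℝ) * w = w := by norm_num
    rw [h1w]
    have hatomw : μ w {(∅ : Finset ℝ)} = ENNReal.ofReal (Real.exp (-(lam * w))) := by
      rw [hatom w hw]; ring_nf
    have hN : μ w {C : Finset ℝ | ¬ (C : Set ℝ) ⊆ Set.Ico 0 w} = 0 :=
      supp_Ico hprob hsupp hfact hw
    match j with
    | 0 =>
      have heq := meas_eq_of_diff (μ w) hN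
        (S := {C : Finset ℝ | Ycount 1 w C = 0}) (S' := {(∅ : Finset ℝ)}) ?_ ?_
      · rw [heq, hatomw]
        simp
      · intro C hC
        by_cases hg : (C : Set ℝ) ⊆ Set.Ico 0 w
        · left
          rw [Set.mem_setOf_eq, Ycount_one hw hg] at hC
          by_cases hne : C.Nonempty
          · rw [if_pos hne] at hC; exact absurd hC one_ne_zero
          · exact Finset.not_nonempty_iff_eq_empty.mp hne
        · exact Or.inr hg
      · intro C hC
        rw [Set.mem_singleton_iff] at hC
        subst hC
        left
        rw [Set.mem_setOf_eq, Ycount_one hw (by simp)]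
        simp
    | 1 =>
      have heq := meas_eq_of_diff (μ w) hN
        (S := {C : Finset ℝ | Ycount 1 w C = 1}) (S' := ({(∅ : Finset ℝ)} : Set (Finset ℝ))ᶜ) ?_ ?_
      · rw [heq, measure_compl (msetF _) (measure_ne_top _ _), measure_univ, hatomw]
        simp
      · intro C hC
        by_cases hg : (C : Set ℝ) ⊆ Set.Ico 0 w
        · left
          rw [Set.mem_setOf_eq, Ycount_one hw hg] at hC
          by_cases hne : C.Nonempty
          · simp only [Set.mem_compl_iff, Set.mem_singleton_iff]
            exact fun h => (by simp [h] at hne)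
          · rw [if_neg hne] at hC; exact absurd hC zero_ne_one
        · exact Or.inr hg
      · intro C hC
        simp only [Set.mem_compl_iff, Set.mem_singleton_iff] at hC
        by_cases hg : (C : Set ℝ) ⊆ Set.Ico 0 w
        · left
          rw [Set.mem_setOf_eq, Ycount_one hw hg,
            if_pos (Finset.nonempty_iff_ne_empty.mpr hC)]
        · exact Or.inr hg
    | (j+2) =>
      have hempty : {C : Finset ℝ | Ycount 1 w C = j + 2} = ∅ := by
        ext C
        simp only [Set.mem_setOf_eq, Set.mem_empty_iff_false, iff_false]
        intro h
        have := Ycount_le 1 w C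
        omega
      rw [hempty, measure_empty, Nat.choose_eq_zero_of_lt (by omega)]
      simp
  | succ n ih =>
    intro w hw j
    haveI := hprob w hw
    set s : ℝ := ((n:ℝ) + 1) * w with hs
    have hspos : 0 < s := by rw [hs]; positivity
    haveI := hprob s hspos
    have hsw : (((n+1)+1 : ℕ) : ℝ) * w = s + w := by rw [hs]; push_cast; ring
    have hscast : ((n+1 : ℕ) : ℝ) * w = s := by rw [hs]; push_cast; ring
    have ih' : ∀ j : ℕ, μ s {C : Finset ℝ | Ycount (n+1) w C = j} =
        ((n+1).choose j : ℝ≥0∞) * (1 - ENNReal.ofReal (Real.exp (-(lam * w))))^j *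
          (ENNReal.ofReal (Real.exp (-(lam * w))))^((n+1) - j) := by
      intro j'
      rw [← hscast]
      exact ih w hw j'
    rw [hsw, split hprob hfact hspos hw]
    set q : ℝ≥0∞ := ENNReal.ofReal (Real.exp (-(lam * w))) with hq
    set p : ℝ≥0∞ := 1 - q with hp
    have hatomw : μ w {(∅ : Finset ℝ)} = q := by
      rw [hq, hatom w hw]; ring_nf
    have hcomplw : μ w ({(∅ : Finset ℝ)} : Set (Finset ℝ))ᶜ = p := by
      rw [measure_compl (msetF _) (measure_ne_top _ _), measure_univ, hatomw, hp]
    set N : Set (Finset ℝ × Finset ℝ) :=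
      ({A : Finset ℝ | ¬ (A : Set ℝ) ⊆ Set.Ico 0 s} ×ˢ (Set.univ : Set (Finset ℝ))) ∪
        ((Set.univ : Set (Finset ℝ)) ×ˢ {B : Finset ℝ | ¬ (B : Set ℝ) ⊆ Set.Ico 0 w}) with hNdef
    have hNnull : ((μ s).prod (μ w)) N = 0 := by
      refine le_antisymm ?_ (zero_le)
      calc ((μ s).prod (μ w)) N
          ≤ ((μ s).prod (μ w)) ({A : Finset ℝ | ¬ (A : Set ℝ) ⊆ Set.Ico 0 s} ×ˢ Set.univ) +
            ((μ s).prod (μ w)) (Set.univ ×ˢ {B : Finset ℝ | ¬ (B : Set ℝ) ⊆ Set.Ico 0 w}) :=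
            measure_union_le _ _
        _ = 0 := by
            rw [Measure.prod_prod, Measure.prod_prod,
              supp_Ico hprob hsupp hfact hspos, supp_Ico hprob hsupp hfact hw]
            simp
    -- key pointwise identity on good pairs
    have hkey : ∀ A B : Finset ℝ, (A : Set ℝ) ⊆ Set.Ico 0 s → (B : Set ℝ) ⊆ Set.Ico 0 w →
        Ycount (n+2) w (A ∪ B.image (fun x => x + s)) =
          Ycount (n+1) w A + (if B.Nonempty then 1 else 0) := by
      intro A B hA hB
      exact Ycount_union n hw (by rwa [← hs]) hB
    match j with
    | 0 =>
      have heq := meas_eq_of_diff ((μ s).prod (μ w)) hNnull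
        (S := (fun p : Finset ℝ × Finset ℝ => p.1 ∪ p.2.image (fun x => x + s)) ⁻¹'
          {C : Finset ℝ | Ycount (n+2) w C = 0})
        (S' := {A : Finset ℝ | Ycount (n+1) w A = 0} ×ˢ ({(∅ : Finset ℝ)} : Set (Finset ℝ)))
        ?_ ?_
      · rw [heq, Measure.prod_prod, hatomw, ih' 0]
        simp only [Nat.choose_zero_right, Nat.cast_one, one_mul, pow_zero, Nat.sub_zero]
        rw [← pow_succ]
      · rintro ⟨A, B⟩ hp2
        by_cases hgA : (A : Set ℝ) ⊆ Set.Ico 0 s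
        · by_cases hgB : (B : Set ℝ) ⊆ Set.Ico 0 w
          · left
            rw [Set.mem_preimage, Set.mem_setOf_eq, hkey A B hgA hgB] at hp2
            constructor
            · simp only [Set.mem_setOf_eq]; omega
            · simp only [Set.mem_singleton_iff]
              by_cases hne : B.Nonempty
              · rw [if_pos hne] at hp2; omega
              · exact Finset.not_nonempty_iff_eq_empty.mp hne
          · exact Or.inr (Or.inr ⟨Set.mem_univ _, hgB⟩)
        · exact Or.inr (Or.inl ⟨hgA, Set.mem_univ _⟩)
      · rintro ⟨A, B⟩ ⟨hA0, hBe⟩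
        simp only [Set.mem_singleton_iff] at hBe
        subst hBe
        by_cases hgA : (A : Set ℝ) ⊆ Set.Ico 0 s
        · left
          rw [Set.mem_preimage, Set.mem_setOf_eq, hkey A ∅ hgA (by simp)]
          simp only [Set.mem_setOf_eq] at hA0
          simp [hA0]
        · exact Or.inr (Or.inl ⟨hgA, Set.mem_univ _⟩)
    | (j'+1) =>
      have heq := meas_eq_of_diff ((μ s).prod (μ w)) hNnull
        (S := (fun p : Finset ℝ × Finset ℝ => p.1 ∪ p.2.image (fun x => x + s)) ⁻¹'
          {C : Finset ℝ | Ycount (n+2) w C = j'+1})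
        (S' := ({A : Finset ℝ | Ycount (n+1) w A = j'+1} ×ˢ ({(∅ : Finset ℝ)} : Set (Finset ℝ))) ∪
          ({A : Finset ℝ | Ycount (n+1) w A = j'} ×ˢ (({(∅ : Finset ℝ)} : Set (Finset ℝ))ᶜ)))
        ?_ ?_
      · rw [heq, measure_union ?hd ((msetF _).prod (msetF _))]
        case hd =>
          rw [Set.disjoint_left]
          rintro ⟨A, B⟩ h1 h2
          exact h2.2 h1.2
        rw [Measure.prod_prod, Measure.prod_prod, hatomw, hcomplw, ih' (j'+1), ih' j']
        -- algebra
        rcases le_or_gt (j'+1) (n+1) with hle | hlt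
        · have e1 : (n+2) - (j'+1) = ((n+1) - (j'+1)) + 1 := by omega
          have e2 : (n+1) - j' = ((n+1) - (j'+1)) + 1 := by omega
          rw [e1, e2, Nat.choose_succ_succ (n+1) j']
          push_cast
          ring
        · rcases Nat.eq_or_lt_of_le hlt with heq2 | hlt2
          · have hj' : j' = n + 1 := by omega
            subst hj'
            rw [Nat.choose_eq_zero_of_lt (by omega : n+1 < (n+1)+1)]
            rw [Nat.choose_self, Nat.choose_self]
            simp only [Nat.cast_one, Nat.cast_zero, one_mul, zero_mul, mul_zero, zero_add,
              Nat.sub_self, pow_zero, mul_one]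
            ring
          · rw [Nat.choose_eq_zero_of_lt (by omega : n+1 < j'+1),
              Nat.choose_eq_zero_of_lt (by omega : n+1 < j'),
              Nat.choose_eq_zero_of_lt (by omega : n+2 < j'+1)]
            simp
      · rintro ⟨A, B⟩ hp2
        by_cases hgA : (A : Set ℝ) ⊆ Set.Ico 0 s
        · by_cases hgB : (B : Set ℝ) ⊆ Set.Ico 0 w
          · left
            rw [Set.mem_preimage, Set.mem_setOf_eq, hkey A B hgA hgB] at hp2
            by_cases hne : B.Nonempty
            · rw [if_pos hne] at hp2
              right
              exact ⟨by simp only [Set.mem_setOf_eq]; omega,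
                by simp only [Set.mem_compl_iff, Set.mem_singleton_iff]
                   exact Finset.nonempty_iff_ne_empty.mp hne⟩
            · rw [if_neg hne] at hp2
              left
              exact ⟨by simp only [Set.mem_setOf_eq]; omega,
                by simp only [Set.mem_singleton_iff]
                   exact Finset.not_nonempty_iff_eq_empty.mp hne⟩
          · exact Or.inr (Or.inr ⟨Set.mem_univ _, hgB⟩)
        · exact Or.inr (Or.inl ⟨hgA, Set.mem_univ _⟩)
      · rintro ⟨A, B⟩ hp2
        by_cases hgA : (A : Set ℝ) ⊆ Set.Ico 0 s
        · by_cases hgB : (B : Set ℝ) ⊆ Set.Ico 0 w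
          · left
            rw [Set.mem_preimage, Set.mem_setOf_eq, hkey A B hgA hgB]
            rcases hp2 with ⟨hA1, hBe⟩ | ⟨hA1, hBne⟩
            · simp only [Set.mem_singleton_iff] at hBe
              subst hBe
              simp only [Set.mem_setOf_eq] at hA1
              simp [hA1]
            · simp only [Set.mem_compl_iff, Set.mem_singleton_iff] at hBne
              simp only [Set.mem_setOf_eq] at hA1
              rw [if_pos (Finset.nonempty_iff_ne_empty.mpr hBne)]
              omega
          · exact Or.inr (Or.inr ⟨Set.mem_univ _, hgB⟩)
        · exact Or.inr (Or.inl ⟨hgA, Set.mem_univ _⟩)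
private lemma tendsto_inv_two_pow : Tendsto (fun m : ℕ => ((2:ℝ)^m)⁻¹) atTop (𝓝 0) := by
  have h := tendsto_pow_atTop_nhds_zero_of_lt_one (by norm_num : (0:ℝ) ≤ 1/2) (by norm_num : (1:ℝ)/2 < 1)
  refine h.congr (fun m => ?_)
  rw [div_pow, one_pow, one_div]

private lemma tendsto_base_exp {c : ℝ} (hc : 0 ≤ c) :
    Tendsto (fun m : ℕ => (2:ℝ)^m * (1 - Real.exp (-(c / 2^m)))) atTop (𝓝 c) := by
  rcases eq_or_lt_of_le hc with hc0 | hcpos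
  · simp only [← hc0, zero_div, neg_zero, Real.exp_zero, sub_self, mul_zero]
    exact tendsto_const_nhds
  · have hg : HasDerivAt (fun x : ℝ => 1 - Real.exp (-(c * x))) c 0 := by
      have h1 : HasDerivAt (fun x : ℝ => -(c * x)) (-c) 0 := by
        have h0 := ((hasDerivAt_id (0:ℝ)).const_mul c).neg
        simp only [mul_one] at h0
        exact h0
      have h2 := (Real.hasDerivAt_exp (-(c * 0))).comp 0 h1
      have h3 : HasDerivAt (fun x : ℝ => Real.exp (-(c * x))) (-c) 0 := by
        rw [show -c = Real.exp (-(c * 0)) * -c by simp]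
        exact h2
      simpa using h3.const_sub 1
    have hslope := hasDerivAt_iff_tendsto_slope.mp hg
    have hseq : Tendsto (fun m : ℕ => ((2:ℝ)^m)⁻¹) atTop (𝓝[≠] (0:ℝ)) := by
      apply tendsto_nhdsWithin_of_tendsto_nhds_of_eventually_within _ tendsto_inv_two_pow
      exact Eventually.of_forall (fun m => by
        simp only [Set.mem_compl_iff, Set.mem_singleton_iff]
        positivity)
    have := hslope.comp hseq
    refine this.congr (fun m => ?_)
    have h2m : ((2:ℝ)^m) ≠ 0 := by positivity
    simp only [Function.comp_apply, slope_def_field]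
    rw [div_eq_iff (by simpa using h2m)]
    field_simp
    simp

private lemma tendsto_choose_div (j : ℕ) :
    Tendsto (fun m : ℕ => (((2^m : ℕ).choose j : ℝ)) / ((2:ℝ)^m)^j) atTop (𝓝 (1 / ((Nat.factorial j) : ℝ))) := by
  have hev : ∀ᶠ m : ℕ in atTop, j ≤ 2^m := by
    filter_upwards [eventually_ge_atTop j] with m hm
    exact hm.trans (Nat.lt_two_pow_self).le
  have hprod : Tendsto (fun m : ℕ => ∏ i ∈ Finset.range j, (1 - (i:ℝ)/(2:ℝ)^m)) atTop (𝓝 1) := by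
    have h : Tendsto (fun m : ℕ => ∏ i ∈ Finset.range j, (1 - (i:ℝ)/(2:ℝ)^m)) atTop
        (𝓝 (∏ _i ∈ Finset.range j, (1:ℝ))) := by
      apply tendsto_finset_prod
      intro i _
      have h1 : Tendsto (fun m : ℕ => (i:ℝ) * ((2:ℝ)^m)⁻¹) atTop (𝓝 0) := by
        simpa using tendsto_inv_two_pow.const_mul (i:ℝ)
      have h2 := (tendsto_const_nhds (x := (1:ℝ)) (f := (atTop : Filter ℕ))).sub h1
      rw [sub_zero] at h2
      refine h2.congr (fun m => ?_)
      show 1 - (i:ℝ) * ((2:ℝ)^m)⁻¹ = 1 - (i:ℝ)/(2:ℝ)^m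
      rw [div_eq_mul_inv]
    simpa using h
  have hmain := hprod.const_mul (1 / ((Nat.factorial j) : ℝ))
  rw [mul_one] at hmain
  refine Tendsto.congr' ?_ hmain
  filter_upwards [hev] with m hm
  have h2m : ((2:ℝ)^m) ≠ 0 := by positivity
  have hdesc : ((2^m : ℕ).choose j : ℝ) * ((Nat.factorial j) : ℝ) = ((2^m : ℕ).descFactorial j : ℝ) := by
    rw [Nat.descFactorial_eq_factorial_mul_choose]
    push_cast
    ring
  have hprod2 : ((2^m : ℕ).descFactorial j : ℝ) = ∏ i ∈ Finset.range j, ((2:ℝ)^m - i) := by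
    rw [Nat.descFactorial_eq_prod_range, Nat.cast_prod]
    apply Finset.prod_congr rfl
    intro i hi
    rw [Nat.cast_sub ((Finset.mem_range.mp hi).le.trans hm)]
    push_cast
    ring
  have hfac : (0:ℝ) < ((Nat.factorial j) : ℝ) := by exact_mod_cast Nat.factorial_pos j
  have hstep : ∀ i ∈ Finset.range j, (1 - (i:ℝ)/(2:ℝ)^m) = ((2:ℝ)^m - i)/(2:ℝ)^m := by
    intro i _
    field_simp
  rw [Finset.prod_congr rfl hstep, Finset.prod_div_distrib, Finset.prod_const, Finset.card_range,
    ← hprod2, ← hdesc]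
  field_simp

private lemma bin_term_tendsto {c : ℝ} (hc : 0 ≤ c) (j : ℕ) :
    Tendsto (fun m : ℕ => (((2^m : ℕ).choose j : ℝ)) * (1 - Real.exp (-(c / 2^m)))^j *
        Real.exp (-(c / 2^m))^((2^m) - j)) atTop
      (𝓝 (Real.exp (-c) * c^j / ((Nat.factorial j) : ℝ))) := by
  have hev : ∀ᶠ m : ℕ in atTop, j ≤ 2^m := by
    filter_upwards [eventually_ge_atTop j] with m hm
    exact hm.trans (Nat.lt_two_pow_self).le
  have hA := tendsto_choose_div j
  have hB := (tendsto_base_exp hc).pow j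
  have hD : Tendsto (fun m : ℕ => Real.exp (-(c / 2^m))^((2^m) - j)) atTop
      (𝓝 (Real.exp (-c))) := by
    have h0 := tendsto_inv_two_pow.const_mul ((j:ℝ)*c)
    rw [mul_zero] at h0
    have hexp : Tendsto (fun m : ℕ => -c + (j:ℝ)*c*((2:ℝ)^m)⁻¹) atTop (𝓝 (-c)) := by
      have := (tendsto_const_nhds (x := -c) (f := (atTop : Filter ℕ))).add h0
      rwa [add_zero] at this
    have hcont := (Real.continuous_exp.tendsto (-c)).comp hexp
    refine Tendsto.congr' ?_ hcont
    filter_upwards [hev] with m hm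
    have h2m : ((2:ℝ)^m) ≠ 0 := by positivity
    simp only [Function.comp_apply]
    rw [← Real.exp_nat_mul]
    congr 1
    rw [Nat.cast_sub hm]
    push_cast
    field_simp
    ring
  have hall := (hA.mul hB).mul hD
  have hval : (1 / ((Nat.factorial j) : ℝ)) * c^j * Real.exp (-c) = Real.exp (-c) * c^j / ((Nat.factorial j) : ℝ) := by
    ring
  rw [hval] at hall
  refine hall.congr (fun m => ?_)
  have h2m : ((2:ℝ)^m) ≠ 0 := by positivity
  rw [mul_pow]
  field_simp

private lemma ennreal_term {e : ℝ} (he0 : 0 ≤ e) (he1 : e ≤ 1) (cmj j nj : ℕ) :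
    ((cmj : ℝ≥0∞)) * (1 - ENNReal.ofReal e)^j * (ENNReal.ofReal e)^nj =
      ENNReal.ofReal ((cmj : ℝ) * (1 - e)^j * e^nj) := by
  rw [← ENNReal.ofReal_natCast cmj, ← ENNReal.ofReal_one, ← ENNReal.ofReal_sub 1 he0,
    ← ENNReal.ofReal_pow (by linarith), ← ENNReal.ofReal_pow he0,
    ← ENNReal.ofReal_mul (Nat.cast_nonneg cmj),
    ← ENNReal.ofReal_mul (mul_nonneg (Nat.cast_nonneg cmj) (pow_nonneg (by linarith) j))]
end Stmt7Aux2
section Stmt7Main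
open Filter Real Set Topology ENNReal

/-- If `(μ_t)` is a family of probability measures on finite subsets of `[0,t]` which
factorizes, `μ_{s+t}` being the law of `C₁ ∪ (C₂ + s)` with `C₁ ~ μ_s`, `C₂ ~ μ_t`
independent, and with `μ_t({∅}) = e^{-λ t}`, then the number of points of a
`μ_t`-distributed set is Poisson with parameter `λ t`. -/
theorem stmt_7 (μ : ℝ → Measure (Finset ℝ)) (lam : ℝ) (hlam : 0 ≤ lam)
    (hprob : ∀ t : ℝ, 0 < t → IsProbabilityMeasure (μ t))
    (hsupp : ∀ t : ℝ, 0 < t → μ t {C : Finset ℝ | (C : Set ℝ) ⊆ Set.Icc 0 t} = 1)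
    (hfact : ∀ s t : ℝ, 0 < s → 0 < t →
      μ (s + t) = ((μ s).prod (μ t)).map
        (fun p : Finset ℝ × Finset ℝ => p.1 ∪ p.2.image (fun x => x + s)))
    (hatom : ∀ t : ℝ, 0 < t →
      μ t {(∅ : Finset ℝ)} = ENNReal.ofReal (Real.exp (-lam * t))) :
    ∀ t : ℝ, 0 < t →
      (μ t).map (fun C : Finset ℝ => C.card) =
        poissonMeasure (Real.toNNReal (lam * t)) := by
  intro t ht
  haveI := hprob t ht
  have hcard : Measurable (fun C : Finset ℝ => C.card) := measF _
  have hct : 0 ≤ lam * t := mul_nonneg hlam ht.le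
  have hr : ((Real.toNNReal (lam * t)) : ℝ) = lam * t := Real.coe_toNNReal _ hct
  have hcdf : ∀ k : ℕ, μ t {C : Finset ℝ | C.card ≤ k} =
      ENNReal.ofReal (∑ j ∈ Finset.range (k+1),
        Real.exp (-(lam*t)) * (lam*t)^j / (Nat.factorial j : ℝ)) := by
    intro k
    set A : ℕ → Set (Finset ℝ) := fun m => {C : Finset ℝ | Ycount (2^m) (t/2^m) C ≤ k} with hA
    have hanti : Antitone A := by
      apply antitone_nat_of_succ_le
      intro m C hC
      simp only [hA, Set.mem_setOf_eq] at hC ⊢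
      refine le_trans ?_ hC
      have h := Ycount_le_double (2^m) (w := t/2^m) (by positivity) C
      have e1 : 2 * 2^m = 2^(m+1) := by ring
      have e2 : (t/2^m)/2 = t/2^(m+1) := by rw [div_div, ← pow_succ]
      rwa [e1, e2] at h
    have hAm : ∀ m : ℕ, μ t (A m) = ENNReal.ofReal (∑ j ∈ Finset.range (k+1),
        ((2^m : ℕ).choose j : ℝ) * (1 - Real.exp (-(lam * t / 2^m)))^j *
          Real.exp (-(lam * t / 2^m))^((2^m) - j)) := by
      intro m
      have hw : 0 < t/2^m := by positivity
      have hn1 : 0 < (2:ℕ)^m := by positivity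
      have hn : (2:ℕ)^m = (2^m - 1) + 1 := by omega
      have hmw : lam * (t/2^m) = lam * t / 2^m := by ring
      have he0 : (0:ℝ) ≤ Real.exp (-(lam * t / 2^m)) := (Real.exp_pos _).le
      have he1 : Real.exp (-(lam * t / 2^m)) ≤ 1 := by
        rw [← Real.exp_zero]
        apply Real.exp_le_exp.mpr
        have hpos : 0 ≤ lam * t / 2^m := by positivity
        linarith
      have hunion : A m = ⋃ j ∈ Finset.range (k+1),
          {C : Finset ℝ | Ycount (2^m) (t/2^m) C = j} := by
        ext C
        simp only [hA, Set.mem_setOf_eq, Set.mem_iUnion, Finset.mem_range]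
        constructor
        · intro h
          exact ⟨Ycount (2^m) (t/2^m) C, by omega, rfl⟩
        · rintro ⟨j, hj, hje⟩
          omega
      rw [hunion, measure_biUnion_finset ?hd (fun _ _ => msetF _)]
      case hd =>
        intro a ha b hb hab
        rw [Function.onFun, Set.disjoint_left]
        intro C hCa hCb
        simp only [Set.mem_setOf_eq] at hCa hCb
        exact hab (hCa ▸ hCb)
      rw [ENNReal.ofReal_sum_of_nonneg (fun j _ =>
        mul_nonneg (mul_nonneg (Nat.cast_nonneg _) (pow_nonneg (by linarith) j))
          (pow_nonneg he0 _))]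
      apply Finset.sum_congr rfl
      intro j hj
      have hb := binom_pmf hprob hsupp hfact hatom (2^m - 1) (t/2^m) hw j
      rw [← hn] at hb
      have hrt2 : (((2:ℕ)^m : ℕ) : ℝ) * (t/2^m) = t := by
        push_cast
        field_simp
      rw [hrt2, hmw] at hb
      exact hb.trans (ennreal_term he0 he1 _ j _)
    have hlim1 : Tendsto (fun m => μ t (A m)) atTop (𝓝 (μ t (⋂ m, A m))) :=
      tendsto_measure_iInter_atTop (μ := μ t)
        (fun m => (msetF _).nullMeasurableSet) hanti ⟨0, measure_ne_top _ _⟩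
    have hAeq : μ t (⋂ m, A m) = μ t {C : Finset ℝ | C.card ≤ k} := by
      apply meas_eq_of_diff (μ t) (supp_Ico hprob hsupp hfact ht)
      · intro C hC
        by_cases hg : (C : Set ℝ) ⊆ Set.Ico 0 t
        · left
          simp only [Set.mem_setOf_eq]
          by_contra hgt
          push_neg at hgt
          obtain ⟨m, hm⟩ := exists_Ycount_eq_card ht C hg
          have h2 := Set.mem_iInter.mp hC m
          simp only [hA, Set.mem_setOf_eq] at h2
          omega
        · exact Or.inr hg
      · intro C hC
        by_cases hg : (C : Set ℝ) ⊆ Set.Ico 0 t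
        · left
          rw [Set.mem_iInter]
          intro m
          simp only [hA, Set.mem_setOf_eq]
          simp only [Set.mem_setOf_eq] at hC
          exact le_trans (Ycount_le_card _ (by positivity) C) hC
        · exact Or.inr hg
    have hlim2 : Tendsto (fun m => μ t (A m)) atTop
        (𝓝 (ENNReal.ofReal (∑ j ∈ Finset.range (k+1),
          Real.exp (-(lam*t)) * (lam*t)^j / (Nat.factorial j : ℝ)))) := by
      apply Tendsto.congr (fun m => (hAm m).symm)
      apply ENNReal.tendsto_ofReal
      apply tendsto_finset_sum
      intro j hj
      exact bin_term_tendsto hct j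
    rw [← hAeq]
    exact tendsto_nhds_unique hlim1 hlim2
  have hpmf : ∀ j : ℕ, μ t {C : Finset ℝ | C.card = j} =
      ENNReal.ofReal (Real.exp (-(lam*t)) * (lam*t)^j / (Nat.factorial j : ℝ)) := by
    intro j
    match j with
    | 0 =>
      have h0 := hcdf 0
      have he : {C : Finset ℝ | C.card ≤ 0} = {C : Finset ℝ | C.card = 0} := by
        ext C
        simp [Nat.le_zero]
      rw [he] at h0
      rw [h0]
      simp
    | (j+1) =>
      have h1 := hcdf (j+1)
      have h2 := hcdf j
      have hsp : {C : Finset ℝ | C.card ≤ j+1} =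
          {C : Finset ℝ | C.card ≤ j} ∪ {C : Finset ℝ | C.card = j+1} := by
        ext C
        simp only [Set.mem_setOf_eq, Set.mem_union]
        omega
      have hdisj : Disjoint {C : Finset ℝ | C.card ≤ j} {C : Finset ℝ | C.card = j+1} := by
        rw [Set.disjoint_left]
        intro C hC1 hC2
        simp only [Set.mem_setOf_eq] at hC1 hC2
        omega
      have hu := measure_union (μ := μ t) hdisj (msetF _)
      rw [← hsp, h1, h2] at hu
      have hsum : ∑ i ∈ Finset.range (j+1+1),
            Real.exp (-(lam*t)) * (lam*t)^i / (Nat.factorial i : ℝ)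
          = (∑ i ∈ Finset.range (j+1), Real.exp (-(lam*t)) * (lam*t)^i / (Nat.factorial i : ℝ))
            + Real.exp (-(lam*t)) * (lam*t)^(j+1) / (Nat.factorial (j+1) : ℝ) :=
        Finset.sum_range_succ _ _
      rw [hsum, ENNReal.ofReal_add
        (Finset.sum_nonneg (fun i _ => by positivity)) (by positivity)] at hu
      exact ((ENNReal.add_right_inj ENNReal.ofReal_ne_top).mp hu).symm
  apply Measure.ext_of_singleton
  intro a
  rw [Measure.map_apply hcard (measurableSet_singleton a)]
  have hpre : (fun C : Finset ℝ => C.card) ⁻¹' {a} = {C : Finset ℝ | C.card = a} := by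
    ext C
    simp
  rw [hpre, hpmf a, poissonMeasure_singleton, hr]

end Stmt7Main
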